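/- For all integers k, ℓ ≥ 2, all natural numbers n ≥ 0, and all a with 1 ≤ a < k, the identity g_{k,ℓ}(k^2·n + a) = −ℓ·g_{k,ℓ}(n) + ℓ·g_{k,ℓ}(k·n) + g_{k,ℓ}(k·n + 1) holds (as an identity of integers). -/
import Mathlib


/-- For integers `k, ℓ ≥ 2`, `g k ℓ 0 = 1` and `g k ℓ n = 1 + ℓ ^ ⌊log_k n⌋` for `n > 0`. -/
def g (k ℓ : ℕ) (n : ℕ) : ℕ := if n = 0 then 1 else 1 + ℓ ^ Nat.log k n

lemma log_mul_add (k m a : ℕ) (hk : 2 ≤ k) (hm : m ≠ 0) (ha : a < k) :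
    Nat.log k (k * m + a) = Nat.log k m + 1 := by
  have hk1 : 1 < k := hk
  apply Nat.log_eq_of_pow_le_of_lt_pow
  · calc k ^ (Nat.log k m + 1) = k * k ^ Nat.log k m := by ring
    _ ≤ k * m := Nat.mul_le_mul_left k (Nat.pow_log_le_self k hm)
    _ ≤ k * m + a := Nat.le_add_right _ _
  · calc k * m + a < k * (m + 1) := by rw [Nat.mul_add, Nat.mul_one]; omega
    _ ≤ k * k ^ (Nat.log k m + 1) :=
        Nat.mul_le_mul_left k (Nat.lt_pow_succ_log_self hk1 m)
    _ = k ^ (Nat.log k m + 1 + 1) := by ring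

theorem stmt_2 (k ℓ : ℕ) (hk : 2 ≤ k) (hℓ : 2 ≤ ℓ) (n a : ℕ)
    (ha₁ : 1 ≤ a) (ha₂ : a < k) :
    (g k ℓ (k ^ 2 * n + a) : ℤ) =
      -(ℓ : ℤ) * g k ℓ n + (ℓ : ℤ) * g k ℓ (k * n) + g k ℓ (k * n + 1) := by
  rcases Nat.eq_zero_or_pos n with rfl | hn
  · simp only [Nat.mul_zero, Nat.zero_add, g]
    have h1 : Nat.log k a = 0 := Nat.log_eq_zero_iff.mpr (Or.inl ha₂)
    have h2 : Nat.log k 1 = 0 := Nat.log_eq_zero_iff.mpr (Or.inl hk)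
    simp [h1, h2]
    omega
  · have hn' : n ≠ 0 := hn.ne'
    have hkn : k * n ≠ 0 := by positivity
    have e1 : Nat.log k (k ^ 2 * n + a) = Nat.log k n + 2 := by
      have : k ^ 2 * n = k * (k * n) := by ring
      rw [this, log_mul_add k (k * n) a hk hkn ha₂,
        Nat.mul_comm, Nat.log_mul_base (by omega) hn']
    have e2 : Nat.log k (k * n) = Nat.log k n + 1 := by
      rw [Nat.mul_comm, Nat.log_mul_base (by omega) hn']
    have e3 : Nat.log k (k * n + 1) = Nat.log k n + 1 :=
      log_mul_add k n 1 hk hn' (by omega)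
    have h0 : k ^ 2 * n + a ≠ 0 := by positivity
    simp only [g, if_neg h0, if_neg hn', if_neg hkn, if_neg (Nat.succ_ne_zero _),
      e1, e2, e3]
    push_cast
    ring
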